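/- Let m ∈ ℕ and P_{m+1} be the degree-(m+1) Legendre polynomial. Define p : [0,1] → ℝ by p(x) = x·(P'_{m+1}(2x-1))². Then sup_{x∈[0,1]} |p(x)| = (m+1)(m+2)·∫₀¹ |p(x)| dx, i.e., ‖p‖_{[0,1],∞} = (m+1)(m+2)·‖p‖_{[0,1],1}. -/

import Mathlib

open Set MeasureTheory

/-- Let `P` be the degree-`(m+1)` Legendre polynomial (characterized here by:
orthogonality on `[-1,1]` to all polynomials of lower degree, `P 1 = 1`,
`P' 1 = (m+1)(m+2)/2`, and `sup_{[-1,1]} |P'| = P' 1`).  For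
`p x = x · (P'(2x-1))²` on `[0,1]` one has
`‖p‖_{[0,1],∞} = (m+1)(m+2) · ‖p‖_{[0,1],1}`. -/
theorem stmt4 (m : ℕ) (P : Polynomial ℝ)
    (hdeg : P.natDegree = m + 1)
    (horth : ∀ q : Polynomial ℝ, q.natDegree < m + 1 →
      ∫ y in Icc (-1 : ℝ) 1, P.eval y * q.eval y = 0)
    (hP1 : P.eval 1 = 1)
    (hP'1 : P.derivative.eval 1 = ((m : ℝ) + 1) * ((m : ℝ) + 2) / 2)
    (hP'max : ∀ y ∈ Icc (-1 : ℝ) 1, |P.derivative.eval y| ≤ P.derivative.eval 1) :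
    sSup ((fun x => |x * (P.derivative.eval (2 * x - 1)) ^ 2|) '' Icc (0 : ℝ) 1) =
      ((m : ℝ) + 1) * ((m : ℝ) + 2) *
        ∫ x in Icc (0 : ℝ) 1, |x * (P.derivative.eval (2 * x - 1)) ^ 2| := by
  set c := P.derivative with hcdef
  -- the sup equals (c.eval 1)^2
  have hsup : sSup ((fun x => |x * (c.eval (2 * x - 1)) ^ 2|) '' Icc (0:ℝ) 1)
      = (c.eval 1) ^ 2 := by
    apply IsGreatest.csSup_eq
    constructor
    · exact ⟨1, by norm_num, by norm_num [abs_of_nonneg (sq_nonneg (c.eval 1))]⟩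
    · rintro y ⟨x, hx, rfl⟩
      have hx0 : (0:ℝ) ≤ x := hx.1
      have hx1 : x ≤ 1 := hx.2
      have hmem : (2*x - 1) ∈ Icc (-1:ℝ) 1 := ⟨by linarith, by linarith⟩
      have h1 : |c.eval (2*x-1)| ≤ c.eval 1 := hP'max _ hmem
      have h2 : (c.eval (2*x-1))^2 ≤ (c.eval 1)^2 := by
        rw [← sq_abs]
        exact pow_le_pow_left₀ (abs_nonneg _) h1 2
      have : |x * (c.eval (2*x-1))^2| = x * (c.eval (2*x-1))^2 :=
        abs_of_nonneg (mul_nonneg hx0 (sq_nonneg _))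
      dsimp only
      rw [this]
      calc x * (c.eval (2*x-1))^2 ≤ 1 * (c.eval 1)^2 :=
            mul_le_mul hx1 h2 (sq_nonneg _) zero_le_one
        _ = (c.eval 1)^2 := one_mul _
  -- the key polynomial for integration by parts
  set Q := (Polynomial.X + 1) * c with hQdef
  have hQdeg : Q.derivative.natDegree < m + 1 := by
    have h1 : c.natDegree ≤ m := by
      have := Polynomial.natDegree_derivative_le P
      rw [hdeg] at this; simpa only [Nat.add_sub_cancel] using this
    have h2 : Q.natDegree ≤ 1 + m := by
      refine le_trans (Polynomial.natDegree_mul_le) ?_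
      have : (Polynomial.X + 1 : Polynomial ℝ).natDegree ≤ 1 := by
        compute_degree
      omega
    have h3 := Polynomial.natDegree_derivative_le Q
    omega
  -- integration by parts
  have hparts : ∫ y in (-1:ℝ)..1, Q.eval y * c.eval y
      = Q.eval 1 * P.eval 1 - Q.eval (-1) * P.eval (-1)
        - ∫ y in (-1:ℝ)..1, Q.derivative.eval y * P.eval y := by
    exact intervalIntegral.integral_mul_deriv_eq_deriv_mul
      (fun x _ => Q.hasDerivAt x) (fun x _ => P.hasDerivAt x)
      (Q.derivative.continuous_aeval.intervalIntegrable _ _)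
      (c.continuous_aeval.intervalIntegrable _ _)
  have horthQ : ∫ y in (-1:ℝ)..1, Q.derivative.eval y * P.eval y = 0 := by
    rw [intervalIntegral.integral_of_le (by norm_num : (-1:ℝ) ≤ 1),
      ← integral_Icc_eq_integral_Ioc]
    rw [show (fun y => Q.derivative.eval y * P.eval y) = fun y => P.eval y * Q.derivative.eval y
      from funext fun y => mul_comm _ _]
    exact horth Q.derivative hQdeg
  have hQ1 : Q.eval 1 = 2 * c.eval 1 := by
    simp only [hQdef, Polynomial.eval_mul, Polynomial.eval_add, Polynomial.eval_X,
      Polynomial.eval_one]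
    ring
  have hQm1 : Q.eval (-1) = 0 := by simp [hQdef]
  have hJ : ∫ y in (-1:ℝ)..1, (y+1) * (c.eval y)^2 = 2 * c.eval 1 := by
    have : ∫ y in (-1:ℝ)..1, (y+1) * (c.eval y)^2 = ∫ y in (-1:ℝ)..1, Q.eval y * c.eval y := by
      apply intervalIntegral.integral_congr
      intro y _
      simp [hQdef]; ring
    rw [this, hparts, horthQ, hQ1, hQm1, hP1]
    ring
  -- compute the L¹ norm
  have hint : ∫ x in Icc (0:ℝ) 1, |x * (c.eval (2 * x - 1)) ^ 2| = (c.eval 1) / 2 := by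
    have h1 : ∫ x in Icc (0:ℝ) 1, |x * (c.eval (2 * x - 1)) ^ 2|
        = ∫ x in Icc (0:ℝ) 1, x * (c.eval (2 * x - 1)) ^ 2 := by
      apply setIntegral_congr_fun measurableSet_Icc
      intro x hx
      exact abs_of_nonneg (mul_nonneg hx.1 (sq_nonneg _))
    have h2 : ∫ x in Icc (0:ℝ) 1, x * (c.eval (2 * x - 1)) ^ 2
        = ∫ x in (0:ℝ)..1, x * (c.eval (2 * x - 1)) ^ 2 := by
      rw [intervalIntegral.integral_of_le (by norm_num : (0:ℝ) ≤ 1),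
        ← integral_Icc_eq_integral_Ioc]
    have h3 : ∫ x in (0:ℝ)..1, x * (c.eval (2 * x - 1)) ^ 2
        = ∫ x in (0:ℝ)..1, (fun y => (y+1)/2 * (c.eval y)^2) (2*x - 1) := by
      apply intervalIntegral.integral_congr
      intro x _
      simp only
      ring
    have h4 := intervalIntegral.integral_comp_mul_sub
      (a := (0:ℝ)) (b := 1) (fun y => (y+1)/2 * (c.eval y)^2) (two_ne_zero) 1
    have h5 : ∫ y in (2*(0:ℝ)-1)..(2*1-1), (y+1)/2 * (c.eval y)^2
        = ∫ y in (-1:ℝ)..1, (y+1)/2 * (c.eval y)^2 := by norm_num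
    have h6 : ∫ y in (-1:ℝ)..1, (y+1)/2 * (c.eval y)^2
        = (1/2) * ∫ y in (-1:ℝ)..1, (y+1) * (c.eval y)^2 := by
      rw [← intervalIntegral.integral_const_mul]
      apply intervalIntegral.integral_congr
      intro y _
      ring
    rw [h1, h2, h3, h4, h5, h6, hJ]
    simp
    ring
  rw [hsup, hint, hP'1]
  ring
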